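/- Let n ≥ 1, let K ⊂ ℝⁿ be a convex body and let ν ∈ (0, |K|]. Then there exists r = r(ν, K) > 0 such that every convex body P ⊆ K with |P| ≥ ν contains a Euclidean ball of radius r, i.e., there exists p ∈ P with B(p, r) ⊆ P. -/

import Mathlib

open MeasureTheory Set

open Finset RealInnerProductSpace in
lemma aux_ball_subset {E : Type*} [NormedAddCommGroup E] [InnerProductSpace ℝ E]
    [CompleteSpace E] {S : Set E} (hconv : Convex ℝ S) (hcl : IsClosed S)
    (hne : S.Nonempty) (z : E) (r : ℝ)
    (H : ∀ u : E, ‖u‖ = 1 → ∃ s ∈ S, r ≤ ⟪u, s - z⟫) :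
    Metric.closedBall z r ⊆ S := by
  intro y hy
  by_contra hyS
  obtain ⟨f, c, hfS, hfy⟩ := geometric_hahn_banach_closed_point hconv hcl hyS
  set v : E := (InnerProductSpace.toDual ℝ E).symm f with hv
  have hvf : ∀ w, ⟪v, w⟫ = f w := fun w => InnerProductSpace.toDual_symm_apply
  obtain ⟨s₀, hs₀⟩ := hne
  have hvne : v ≠ 0 := by
    intro h0
    have h1 : f s₀ < c := hfS s₀ hs₀
    have h2 : c < f y := hfy
    have h3 : f s₀ = f y := by rw [← hvf, ← hvf, h0]; simp
    linarith
  have hnv : 0 < ‖v‖ := norm_pos_iff.mpr hvne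
  have hu : ‖(‖v‖⁻¹ • v)‖ = 1 := by
    rw [norm_smul, norm_inv, norm_norm]
    field_simp
  obtain ⟨s, hsS, hs⟩ := H (‖v‖⁻¹ • v) hu
  rw [real_inner_smul_left] at hs
  have h3 : r * ‖v‖ ≤ ⟪v, s - z⟫ := by
    have := mul_le_mul_of_nonneg_left hs hnv.le
    rw [← mul_assoc, mul_inv_cancel₀ hnv.ne', one_mul] at this
    linarith [this]
  have h4 : ⟪v, y - z⟫ ≤ ‖v‖ * r := by
    calc ⟪v, y - z⟫ ≤ ‖v‖ * ‖y - z‖ := real_inner_le_norm v (y - z)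
      _ ≤ ‖v‖ * r := by
          have : ‖y - z‖ ≤ r := by
            rw [← dist_eq_norm]; exact Metric.mem_closedBall.mp hy
          exact mul_le_mul_of_nonneg_left this hnv.le
  have e1 : ⟪v, s - z⟫ = f s - f z := by rw [inner_sub_right, hvf, hvf]
  have e2 : ⟪v, y - z⟫ = f y - f z := by rw [inner_sub_right, hvf, hvf]
  have h5 : f s < c := hfS s hsS
  have h6 : c < f y := hfy
  nlinarith

open Finset in
lemma aux_tri (n : ℕ) (h D ε : ℝ) (hh : 0 < h) (hD : 0 ≤ D) (hε : 0 ≤ ε)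
    (a : Fin n → Fin n → ℝ) (c : Fin n → ℝ)
    (ha0 : ∀ k j : Fin n, k < j → a k j = 0) (hak : ∀ k, h ≤ a k k)
    (haD : ∀ k j, |a k j| ≤ D)
    (hc : ∀ k, |∑ j, a k j * c j| ≤ ε) :
    ∀ k : Fin n, |c k| ≤ ε / h * (1 + D / h) ^ (k : ℕ) := by
  have hq' : (1 : ℝ) + D / h - 1 = D / h := by ring
  generalize hq : (1 : ℝ) + D / h = q at *
  have hq1 : 1 ≤ q := by
    have : 0 ≤ D / h := div_nonneg hD hh.le
    linarith
  have main : ∀ m : ℕ, ∀ k : Fin n, (k : ℕ) = m → |c k| ≤ ε / h * q ^ (k : ℕ) := by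
    intro m
    induction m using Nat.strong_induction_on with
    | _ m ih =>
      intro k hk
      have hbound : ∀ j ∈ Finset.univ.erase k,
          |a k j * c j| ≤ if (j : ℕ) < m then D * (ε / h * q ^ (j : ℕ)) else 0 := by
        intro j hj
        have hjk : j ≠ k := Finset.mem_erase.mp hj |>.1
        by_cases hlt : (j : ℕ) < m
        · simp only [if_pos hlt]
          rw [abs_mul]
          exact mul_le_mul (haD k j) (ih (j : ℕ) hlt j rfl) (abs_nonneg _) hD
        · have hne : (j : ℕ) ≠ (k : ℕ) := fun he => hjk (Fin.val_injective he)
          have : k < j := by rw [Fin.lt_def]; omega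
          rw [ha0 k j this, if_neg hlt]; simp
      have hsum1 : ∑ j ∈ Finset.univ.erase k, |a k j * c j|
          ≤ ∑ j ∈ Finset.univ.erase k, (if (j : ℕ) < m then D * (ε / h * q ^ (j : ℕ)) else 0) :=
        Finset.sum_le_sum hbound
      have hsum2 : ∑ j ∈ Finset.univ.erase k, (if (j : ℕ) < m then D * (ε / h * q ^ (j : ℕ)) else 0)
          = ∑ j : Fin n, (if (j : ℕ) < m then D * (ε / h * q ^ (j : ℕ)) else 0) := by
        apply Finset.sum_erase
        simp [hk]
      have hmn : m ≤ n := by omega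
      have hsum3 : ∑ j : Fin n, (if (j : ℕ) < m then D * (ε / h * q ^ (j : ℕ)) else 0)
          = ∑ j ∈ Finset.range m, D * (ε / h * q ^ j) := by
        rw [Fin.sum_univ_eq_sum_range (fun j => if j < m then D * (ε / h * q ^ j) else 0) n]
        rw [← Finset.sum_subset (Finset.range_subset_range.mpr hmn)]
        · exact Finset.sum_congr rfl fun j hj => if_pos (Finset.mem_range.mp hj)
        · intro j _ hj
          exact if_neg (fun hlt => hj (Finset.mem_range.mpr hlt))
      set Sg : ℝ := ∑ j ∈ Finset.range m, q ^ j with hSg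
      have hfac : ∑ j ∈ Finset.range m, D * (ε / h * q ^ j) = D * (ε / h) * Sg := by
        rw [hSg, Finset.mul_sum]
        exact Finset.sum_congr rfl fun j _ => by ring
      have hgeom : (q - 1) * Sg = q ^ m - 1 := by
        have := geom_sum_mul q m
        rw [hSg]; linarith
      have e1 : a k k * c k = (∑ j, a k j * c j) - ∑ j ∈ Finset.univ.erase k, a k j * c j := by
        rw [← Finset.add_sum_erase _ _ (Finset.mem_univ k)]; ring
      have habs : |a k k * c k| ≤ ε + D * (ε / h) * Sg := by
        rw [e1]
        calc |(∑ j, a k j * c j) - ∑ j ∈ Finset.univ.erase k, a k j * c j|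
            ≤ |∑ j, a k j * c j| + |∑ j ∈ Finset.univ.erase k, a k j * c j| := abs_sub _ _
          _ ≤ ε + D * (ε / h) * Sg := by
              refine add_le_add (hc k) ?_
              calc |∑ j ∈ Finset.univ.erase k, a k j * c j|
                  ≤ ∑ j ∈ Finset.univ.erase k, |a k j * c j| := Finset.abs_sum_le_sum_abs _ _
                _ ≤ D * (ε / h) * Sg := by rw [← hfac, ← hsum3, ← hsum2]; exact hsum1
      have hlow : h * |c k| ≤ |a k k * c k| := by
        rw [abs_mul]
        have h1 : h ≤ |a k k| := le_trans (hak k) (le_abs_self _)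
        exact mul_le_mul_of_nonneg_right h1 (abs_nonneg _) |>.trans_eq rfl
      have e2 : D * (ε / h) * Sg = ε * ((q - 1) * Sg) := by
        rw [hq']; ring
      rw [hgeom] at e2
      rw [hk, div_mul_eq_mul_div, le_div_iff₀ hh]
      nlinarith [habs, hlow, e2]
  intro k
  exact main (k : ℕ) k rfl

open Finset RealInnerProductSpace in
lemma aux_slab (n : ℕ) (b : OrthonormalBasis (Fin n) ℝ (EuclideanSpace ℝ (Fin n)))
    (x₀ : EuclideanSpace ℝ (Fin n)) (B : Fin n → ℝ) :
    volume {y : EuclideanSpace ℝ (Fin n) | ∀ j, |⟪b j, y - x₀⟫| ≤ B j}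
      = ∏ j, ENNReal.ofReal (2 * B j) := by
  have hT : MeasurePreserving (fun y : EuclideanSpace ℝ (Fin n) => b.repr (y - x₀))
      volume volume :=
    b.measurePreserving_repr.comp (measurePreserving_sub_right volume x₀)
  have hset : {y : EuclideanSpace ℝ (Fin n) | ∀ j, |⟪b j, y - x₀⟫| ≤ B j}
      = (fun y : EuclideanSpace ℝ (Fin n) => b.repr (y - x₀)) ⁻¹'
        (WithLp.ofLp ⁻¹' (Set.univ.pi fun j => Set.Icc (-B j) (B j))) := by
    ext y
    simp only [Set.mem_setOf_eq, Set.mem_preimage, Set.mem_pi, Set.mem_univ, true_implies]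
    constructor
    · intro hy j
      simp only [Set.mem_Icc]
      rw [b.repr_apply_apply]
      exact abs_le.mp (hy j)
    · intro hy j
      rw [← b.repr_apply_apply]
      exact abs_le.mpr (by simpa [Set.mem_Icc] using hy j)
  have hpimeas : MeasurableSet (Set.univ.pi fun j : Fin n => Set.Icc (-B j) (B j)) :=
    MeasurableSet.univ_pi fun j => measurableSet_Icc
  rw [hset, hT.measure_preimage (s := WithLp.ofLp ⁻¹' (Set.univ.pi fun j : Fin n => Set.Icc (-B j) (B j))) (hpimeas.preimage (MeasurableEquiv.toLp 2 (Fin n → ℝ)).symm.measurable).nullMeasurableSet]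
  have h2 := (EuclideanSpace.volume_preserving_symm_measurableEquiv_toLp (Fin n)).measure_preimage
    (s := Set.univ.pi fun j : Fin n => Set.Icc (-B j) (B j)) hpimeas.nullMeasurableSet
  have hpre : (MeasurableEquiv.toLp 2 (Fin n → ℝ)).symm ⁻¹'
      (Set.univ.pi fun j : Fin n => Set.Icc (-B j) (B j))
      = WithLp.ofLp ⁻¹' (Set.univ.pi fun j : Fin n => Set.Icc (-B j) (B j)) := by
    rfl
  rw [hpre] at h2
  rw [h2, volume_pi_pi]
  congr 1
  ext j
  rw [Real.volume_Icc]
  congr 1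
  ring

open Finset RealInnerProductSpace in
lemma aux_construct (n : ℕ) (P : Set (EuclideanSpace ℝ (Fin n)))
    (x₀ : EuclideanSpace ℝ (Fin n)) (hx₀ : x₀ ∈ P) (D h : ℝ) (hh : 0 < h)
    (hD : ∀ y ∈ P, ‖y - x₀‖ ≤ D)
    (hslab : ∀ (b : OrthonormalBasis (Fin n) ℝ (EuclideanSpace ℝ (Fin n))) (k : ℕ), k < n →
      ¬ (P ⊆ {y | ∀ j : Fin n, |⟪b j, y - x₀⟫| ≤ (if (j : ℕ) < k then D else h)})) :
    ∃ (e : Fin n → EuclideanSpace ℝ (Fin n)) (x : Fin n → EuclideanSpace ℝ (Fin n)),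
      Orthonormal ℝ e ∧ (∀ i, x i ∈ P) ∧ (∀ i, h ≤ ⟪e i, x i - x₀⟫) ∧
      (∀ i j : Fin n, i < j → ⟪e j, x i - x₀⟫ = 0) := by
  have key : ∀ k : ℕ, k ≤ n → ∃ (f : Fin k → EuclideanSpace ℝ (Fin n))
      (x : Fin k → EuclideanSpace ℝ (Fin n)),
      Orthonormal ℝ f ∧ (∀ i, x i ∈ P) ∧
      (∀ i, x i - x₀ ∈ Submodule.span ℝ (Set.range f)) ∧
      (∀ i, h ≤ ⟪f i, x i - x₀⟫) ∧
      (∀ i j, i < j → ⟪f j, x i - x₀⟫ = 0) := by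
    intro k
    induction k with
    | zero =>
      intro _
      exact ⟨Fin.elim0, Fin.elim0, orthonormal_iff_ite.mpr (fun i => i.elim0),
        fun i => i.elim0, fun i => i.elim0, fun i => i.elim0, fun i => i.elim0⟩
    | succ k ihk =>
      intro hk1
      have hkn : k ≤ n := Nat.le_of_succ_le hk1
      obtain ⟨f, x, hf, hxP, hxspan, hxh, hxorth⟩ := ihk hkn
      set W : Submodule ℝ (EuclideanSpace ℝ (Fin n)) := Submodule.span ℝ (Set.range f) with hW
      by_cases hex : ∃ y ∈ P, h ≤ ‖y - x₀ - (Submodule.orthogonalProjectionOnto W (y - x₀) : EuclideanSpace ℝ (Fin n))‖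
      · obtain ⟨y, hyP, hy⟩ := hex
        set g : EuclideanSpace ℝ (Fin n) :=
          y - x₀ - (Submodule.orthogonalProjectionOnto W (y - x₀) : EuclideanSpace ℝ (Fin n)) with hg
        have hgW : g ∈ Wᗮ := W.sub_starProjection_mem_orthogonal _
        have hgnorm : 0 < ‖g‖ := lt_of_lt_of_le hh hy
        have hgne : g ≠ 0 := by
          intro h0; rw [h0, norm_zero] at hgnorm; exact lt_irrefl _ hgnorm
        set u : EuclideanSpace ℝ (Fin n) := ‖g‖⁻¹ • g with hu
        have huW : u ∈ Wᗮ := Submodule.smul_mem _ _ hgW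
        have hunorm : ‖u‖ = 1 := by
          rw [hu, norm_smul, norm_inv, norm_norm]; field_simp
        have hdecomp : y - x₀ = (Submodule.orthogonalProjectionOnto W (y - x₀) : EuclideanSpace ℝ (Fin n)) + g := by
          rw [hg]; abel
        have hgu : g = ‖g‖ • u := by
          rw [hu, smul_smul, mul_inv_cancel₀ hgnorm.ne', one_smul]
        have hinner_uy : ⟪u, y - x₀⟫ = ‖g‖ := by
          rw [hdecomp, inner_add_right,
            Submodule.inner_left_of_mem_orthogonal (Submodule.orthogonalProjectionOnto W (y - x₀)).2 huW,
            hu, real_inner_smul_left, real_inner_self_eq_norm_mul_norm]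
          field_simp
          rw [zero_add]
        refine ⟨Fin.snoc f u, Fin.snoc x y, ?_, ?_, ?_, ?_, ?_⟩
        · rw [orthonormal_iff_ite]
          intro i j
          refine Fin.lastCases ?_ (fun i' => ?_) i
          · refine Fin.lastCases ?_ (fun j' => ?_) j
            · simp only [Fin.snoc_last, if_pos rfl]
              rw [real_inner_self_eq_norm_mul_norm, hunorm]; norm_num
            · simp only [Fin.snoc_last, Fin.snoc_castSucc,
                if_neg (Fin.castSucc_lt_last j').ne']
              exact Submodule.inner_left_of_mem_orthogonal
                (Submodule.subset_span (Set.mem_range_self j')) huW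
          · refine Fin.lastCases ?_ (fun j' => ?_) j
            · simp only [Fin.snoc_last, Fin.snoc_castSucc,
                if_neg (Fin.castSucc_lt_last i').ne]
              exact Submodule.inner_right_of_mem_orthogonal
                (Submodule.subset_span (Set.mem_range_self i')) huW
            · simp only [Fin.snoc_castSucc, Fin.castSucc_inj]
              exact orthonormal_iff_ite.mp hf i' j'
        · intro i
          refine Fin.lastCases ?_ (fun i' => ?_) i
          · rw [Fin.snoc_last]; exact hyP
          · rw [Fin.snoc_castSucc]; exact hxP i'
        · intro i
          have hsub : Set.range f ⊆ Set.range (Fin.snoc f u : Fin (k+1) → EuclideanSpace ℝ (Fin n)) := by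
            rintro _ ⟨i', rfl⟩
            exact ⟨Fin.castSucc i', by simp⟩
          have hWle : W ≤ Submodule.span ℝ (Set.range (Fin.snoc f u : Fin (k+1) → EuclideanSpace ℝ (Fin n))) := by
            rw [hW]; exact Submodule.span_mono hsub
          refine Fin.lastCases ?_ (fun i' => ?_) i
          · rw [Fin.snoc_last, hdecomp]
            refine Submodule.add_mem _ (hWle (Submodule.orthogonalProjectionOnto W (y - x₀)).2) ?_
            rw [hgu]
            exact Submodule.smul_mem _ _ (Submodule.subset_span ⟨Fin.last k, by simp⟩)
          · rw [Fin.snoc_castSucc]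
            exact hWle (hxspan i')
        · intro i
          refine Fin.lastCases ?_ (fun i' => ?_) i
          · rw [Fin.snoc_last, Fin.snoc_last, hinner_uy]; exact hy
          · rw [Fin.snoc_castSucc, Fin.snoc_castSucc]; exact hxh i'
        · intro i j hij
          rcases Fin.eq_castSucc_or_eq_last j with ⟨j', rfl⟩ | rfl
          · rcases Fin.eq_castSucc_or_eq_last i with ⟨i', rfl⟩ | rfl
            · rw [Fin.snoc_castSucc, Fin.snoc_castSucc]
              exact hxorth i' j' (Fin.castSucc_lt_castSucc_iff.mp hij)
            · exact absurd hij (Fin.castSucc_lt_last j').asymm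
          · rcases Fin.eq_castSucc_or_eq_last i with ⟨i', rfl⟩ | rfl
            · rw [Fin.snoc_last, Fin.snoc_castSucc]
              exact Submodule.inner_left_of_mem_orthogonal (hxspan i') huW
            · exact absurd hij (lt_irrefl _)
      · -- no point far from W: derive contradiction with hslab
        push_neg at hex
        exfalso
        set v : Fin n → EuclideanSpace ℝ (Fin n) :=
          fun j => if hj : (j : ℕ) < k then f ⟨j, hj⟩ else 0 with hv
        set s : Set (Fin n) := {j | (j : ℕ) < k} with hs
        have hrestrict : s.restrict v = f ∘ (fun j : s => (⟨(j : Fin n), j.2⟩ : Fin k)) := by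
          funext j
          simp only [Set.restrict_apply, Function.comp_apply, hv]
          exact dif_pos j.2
        have horth : Orthonormal ℝ (s.restrict v) := by
          rw [hrestrict]
          refine hf.comp _ (fun j j' hjj => ?_)
          apply Subtype.ext
          apply Fin.ext
          injection hjj
        have hcard : Module.finrank ℝ (EuclideanSpace ℝ (Fin n)) = Fintype.card (Fin n) := by
          rw [finrank_euclideanSpace_fin, Fintype.card_fin]
        obtain ⟨b, hb⟩ := horth.exists_orthonormalBasis_extension_of_card_eq hcard
        refine hslab b k (by omega) ?_
        intro y hyP j
        by_cases hj : (j : ℕ) < k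
        · rw [if_pos hj]
          calc |⟪b j, y - x₀⟫| ≤ ‖b j‖ * ‖y - x₀‖ := abs_real_inner_le_norm _ _
            _ ≤ D := by rw [b.orthonormal.1 j, one_mul]; exact hD y hyP
        · rw [if_neg hj]
          have hbjW : b j ∈ Wᗮ := by
            rw [Submodule.mem_orthogonal]
            intro w hw
            rw [hW] at hw
            induction hw using Submodule.span_induction with
            | mem w hwmem =>
              obtain ⟨i, rfl⟩ := hwmem
              have hikn : (i : ℕ) < n := lt_of_lt_of_le i.2 hkn
              set j' : Fin n := ⟨(i : ℕ), hikn⟩ with hj'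
              have hbj' : b j' = f i := by
                have := hb j' (by exact i.2)
                rw [this, hv]
                simp only [hj']
                rw [dif_pos i.2]
              rw [← hbj']
              exact b.orthonormal.2 (by intro he; apply hj; rw [← he]; exact i.2)
            | zero => rw [inner_zero_left]
            | add w₁ w₂ h₁ h₂ ih₁ ih₂ => rw [inner_add_left, ih₁, ih₂, add_zero]
            | smul a w hw ih => rw [real_inner_smul_left, ih, mul_zero]
          have h0 : ⟪b j, ((Submodule.orthogonalProjectionOnto W) (y - x₀) : EuclideanSpace ℝ (Fin n))⟫ = 0 :=
            Submodule.inner_left_of_mem_orthogonal (Submodule.orthogonalProjectionOnto W (y - x₀)).2 hbjW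
          have hdiff : ⟪b j, y - x₀ - ((Submodule.orthogonalProjectionOnto W) (y - x₀) : EuclideanSpace ℝ (Fin n))⟫
              = ⟪b j, y - x₀⟫ := by
            rw [inner_sub_right, h0, sub_zero]
          rw [← hdiff]
          calc |⟪b j, y - x₀ - (Submodule.orthogonalProjectionOnto W (y - x₀) : EuclideanSpace ℝ (Fin n))⟫|
              ≤ ‖b j‖ * ‖y - x₀ - (Submodule.orthogonalProjectionOnto W (y - x₀) : EuclideanSpace ℝ (Fin n))‖ :=
                abs_real_inner_le_norm _ _
            _ ≤ h := by
                rw [b.orthonormal.1 j, one_mul]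
                exact (hex y hyP).le
  obtain ⟨f, x, hf, hxP, _, hxh, hxorth⟩ := key n le_rfl
  exact ⟨f, x, hf, hxP, hxh, hxorth⟩

open Finset RealInnerProductSpace in
set_option maxHeartbeats 1000000 in
theorem stmt4 (n : ℕ) (hn : 1 ≤ n) (K : Set (EuclideanSpace ℝ (Fin n)))
    (hKne : K.Nonempty) (hKcp : IsCompact K) (hKcv : Convex ℝ K)
    (ν : ℝ) (hν : 0 < ν) (hνK : ν ≤ (volume K).toReal) :
    ∃ r : ℝ, 0 < r ∧ ∀ P : Set (EuclideanSpace ℝ (Fin n)),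
      P ⊆ K → P.Nonempty → IsCompact P → Convex ℝ P → ν ≤ (volume P).toReal →
      ∃ p ∈ P, Metric.closedBall p r ⊆ P := by
  obtain ⟨C, hC⟩ := Metric.isBounded_iff.mp hKcp.isBounded
  obtain ⟨D, hDdef⟩ : ∃ D : ℝ, D = max C 1 := ⟨_, rfl⟩
  have hD1 : (1 : ℝ) ≤ D := by rw [hDdef]; exact le_max_right _ _
  have hD0 : (0 : ℝ) < D := lt_of_lt_of_le one_pos hD1
  have hpow_pos : (0 : ℝ) < (2 * D + 2) ^ (n - 1) := pow_pos (by linarith) _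
  obtain ⟨h, hhdef⟩ : ∃ h : ℝ, h = min (ν / (4 * (2 * D + 2) ^ (n - 1))) 1 := ⟨_, rfl⟩
  have hh : 0 < h := by rw [hhdef]; exact lt_min (div_pos hν (by positivity)) one_pos
  have hh1 : h ≤ 1 := by rw [hhdef]; exact min_le_right _ _
  obtain ⟨q, hqdef⟩ : ∃ q : ℝ, q = 1 + D / h := ⟨_, rfl⟩
  have hq1 : (1 : ℝ) ≤ q := by
    have : 0 ≤ D / h := div_nonneg hD0.le hh.le
    rw [hqdef]; linarith
  have hq0 : (0 : ℝ) < q := lt_of_lt_of_le one_pos hq1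
  have hnR0 : (0 : ℝ) < (n : ℝ) := by exact_mod_cast hn
  obtain ⟨r, hrdef⟩ : ∃ r : ℝ, r = h / (4 * (n : ℝ) ^ 2 * q ^ n) := ⟨_, rfl⟩
  have hr : 0 < r := by
    rw [hrdef]
    exact div_pos hh (mul_pos (mul_pos four_pos (pow_pos hnR0 2)) (pow_pos hq0 n))
  refine ⟨r, hr, ?_⟩
  intro P hPK hPne hPcp hPcv hPv
  obtain ⟨x₀, hx₀⟩ := hPne
  have hDiam : ∀ y ∈ P, ‖y - x₀‖ ≤ D := by
    intro y hy
    have := hC (hPK hy) (hPK hx₀)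
    rw [dist_eq_norm] at this
    refine this.trans ?_
    rw [hDdef]
    exact le_max_left _ _
  have hslab : ∀ (b : OrthonormalBasis (Fin n) ℝ (EuclideanSpace ℝ (Fin n))) (k : ℕ), k < n →
      ¬ (P ⊆ {y | ∀ j : Fin n, |⟪b j, y - x₀⟫| ≤ (if (j : ℕ) < k then D else h)}) := by
    intro b k hkn hsub
    have hvol : volume P ≤ ∏ j : Fin n, ENNReal.ofReal
        (2 * (if (j : ℕ) < k then D else h)) := by
      rw [← aux_slab n b x₀ (fun j => if (j : ℕ) < k then D else h)]
      exact measure_mono hsub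
    have hnpos : 0 < n := hn
    set last : Fin n := ⟨n - 1, by omega⟩ with hlast
    have hBlast : (if ((last : Fin n) : ℕ) < k then D else h) = h := by
      apply if_neg
      show ¬ (n - 1) < k
      omega
    have hprod : ∏ j : Fin n, ENNReal.ofReal (2 * (if (j : ℕ) < k then D else h))
        ≤ ENNReal.ofReal (2 * h) * ENNReal.ofReal (2 * D + 2) ^ (n - 1) := by
      rw [← Finset.mul_prod_erase _ _ (Finset.mem_univ last), hBlast]
      refine mul_le_mul_right ?_ _
      calc ∏ j ∈ Finset.univ.erase last, ENNReal.ofReal (2 * (if (j : ℕ) < k then D else h))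
          ≤ ∏ _j ∈ Finset.univ.erase last, ENNReal.ofReal (2 * D + 2) := by
            refine Finset.prod_le_prod' ?_
            intro j _
            apply ENNReal.ofReal_le_ofReal
            by_cases hj : (j : ℕ) < k
            · rw [if_pos hj]; linarith
            · rw [if_neg hj]; linarith
        _ = ENNReal.ofReal (2 * D + 2) ^ (n - 1) := by
            rw [Finset.prod_const, Finset.card_erase_of_mem (Finset.mem_univ last),
              Finset.card_univ, Fintype.card_fin]
    have hsmall : volume P ≤ ENNReal.ofReal (ν / 2) := by
      refine hvol.trans (hprod.trans ?_)
      rw [← ENNReal.ofReal_pow (by linarith), ← ENNReal.ofReal_mul (by linarith)]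
      apply ENNReal.ofReal_le_ofReal
      have h4 : h ≤ ν / (4 * (2 * D + 2) ^ (n - 1)) := by rw [hhdef]; exact min_le_left _ _
      rw [le_div_iff₀ (by positivity)] at h4
      nlinarith [hpow_pos]
    have : (volume P).toReal ≤ ν / 2 :=
      ENNReal.toReal_le_of_le_ofReal (by linarith) hsmall
    linarith
  obtain ⟨e, x, he, hxP, hxh, hxorth⟩ := aux_construct n P x₀ hx₀ D h hh hDiam hslab
  have hcard : Module.finrank ℝ (EuclideanSpace ℝ (Fin n)) = Fintype.card (Fin n) := by
    rw [finrank_euclideanSpace_fin, Fintype.card_fin]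
  have huniv : Orthonormal ℝ ((Set.univ : Set (Fin n)).restrict e) :=
    he.comp _ Subtype.coe_injective
  obtain ⟨b, hb⟩ := huniv.exists_orthonormalBasis_extension_of_card_eq hcard
  have hbe : ∀ j, b j = e j := fun j => hb j (Set.mem_univ j)
  set p : Fin (n + 1) → EuclideanSpace ℝ (Fin n) := Fin.cons x₀ x with hp
  have hpP : ∀ i, p i ∈ P := by
    intro i
    refine Fin.cases ?_ ?_ i
    · rw [hp, Fin.cons_zero]; exact hx₀
    · intro i'; rw [hp, Fin.cons_succ]; exact hxP i'
  have hn1 : ((n : ℝ) + 1) ≠ 0 := by positivity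
  set z : EuclideanSpace ℝ (Fin n) := ((n : ℝ) + 1)⁻¹ • ∑ i, p i with hz
  have hzP : z ∈ P := by
    have := hPcv.sum_mem (t := Finset.univ) (w := fun _ : Fin (n + 1) => ((n : ℝ) + 1)⁻¹)
      (fun i _ => by positivity)
      (by
        rw [Finset.sum_const, Finset.card_univ, Fintype.card_fin, nsmul_eq_mul]
        push_cast
        field_simp)
      (fun i _ => hpP i)
    rw [← Finset.smul_sum] at this
    exact this
  have hzsum : ∑ i : Fin (n + 1), (p i - z) = 0 := by
    rw [Finset.sum_sub_distrib, Finset.sum_const, Finset.card_univ, Fintype.card_fin, hz,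
      ← Nat.cast_smul_eq_nsmul ℝ, smul_smul]
    push_cast
    rw [mul_inv_cancel₀ hn1, one_smul, sub_self]
  refine ⟨z, hzP, ?_⟩
  apply aux_ball_subset hPcv hPcp.isClosed ⟨x₀, hx₀⟩ z r
  intro u hu
  by_contra hcon
  push_neg at hcon
  set t : Fin (n + 1) → ℝ := fun i => ⟪u, p i - z⟫ with ht
  have htsum : ∑ i, t i = 0 := by
    rw [ht, ← inner_sum, hzsum, inner_zero_right]
  have htlt : ∀ i, t i < r := fun i => hcon (p i) (hpP i)
  have htabs : ∀ i, |t i| ≤ (n : ℝ) * r := by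
    intro i
    have hsum_erase : ∑ j ∈ Finset.univ.erase i, t j ≤ (n : ℝ) * r := by
      calc ∑ j ∈ Finset.univ.erase i, t j ≤ ∑ _j ∈ Finset.univ.erase i, r :=
            Finset.sum_le_sum (fun j _ => (htlt j).le)
        _ ≤ (n : ℝ) * r := by
            rw [Finset.sum_const, Finset.card_erase_of_mem (Finset.mem_univ i),
              Finset.card_univ, Fintype.card_fin, nsmul_eq_mul]
            have : (n + 1 - 1 : ℕ) = n := by omega
            rw [this]
    have hti : t i = -∑ j ∈ Finset.univ.erase i, t j := by
      have := Finset.add_sum_erase _ t (Finset.mem_univ i)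
      rw [htsum] at this
      linarith
    rw [abs_le]
    constructor
    · rw [hti]; linarith
    · have hnr : r ≤ (n : ℝ) * r := by
        calc r = 1 * r := (one_mul r).symm
          _ ≤ (n : ℝ) * r := mul_le_mul_of_nonneg_right (by exact_mod_cast hn) hr.le
      linarith [htlt i]
  obtain ⟨ε, hεdef⟩ : ∃ ε : ℝ, ε = 2 * (n : ℝ) * r := ⟨_, rfl⟩
  have hε0 : 0 ≤ ε := by rw [hεdef]; positivity
  have hka : ∀ k : Fin n, |⟪x k - x₀, u⟫| ≤ ε := by
    intro k
    have h1 : t k.succ - t 0 = ⟪u, x k - x₀⟫ := by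
      rw [ht]
      simp only [hp, Fin.cons_succ, Fin.cons_zero]
      simp only [inner_sub_right]
      ring
    rw [real_inner_comm, ← h1, hεdef]
    have h2 := htabs k.succ
    have h3 := htabs 0
    calc |t k.succ - t 0| ≤ |t k.succ| + |t 0| := abs_sub _ _
      _ ≤ 2 * (n : ℝ) * r := by linarith
  have htri := aux_tri n h D ε hh hD0.le hε0
    (fun k j => ⟪x k - x₀, b j⟫) (fun j => ⟪b j, u⟫)
    (fun k j hkj => by
      show ⟪x k - x₀, b j⟫ = 0
      rw [real_inner_comm, hbe]; exact hxorth k j hkj)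
    (fun k => by
      show h ≤ ⟪x k - x₀, b k⟫
      rw [real_inner_comm, hbe]; exact hxh k)
    (fun k j => by
      show |⟪x k - x₀, b j⟫| ≤ D
      calc |⟪x k - x₀, b j⟫| ≤ ‖x k - x₀‖ * ‖b j‖ := abs_real_inner_le_norm _ _
        _ ≤ D := by rw [b.orthonormal.1 j, mul_one]; exact hDiam _ (hxP k))
    (fun k => by
      show |∑ j, ⟪x k - x₀, b j⟫ * ⟪b j, u⟫| ≤ ε
      rw [b.sum_inner_mul_inner]; exact hka k)
  rw [← hqdef] at htri
  have hpars : ∑ j : Fin n, ⟪b j, u⟫ ^ 2 = 1 := by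
    have hps := b.sum_inner_mul_inner u u
    rw [real_inner_self_eq_norm_mul_norm, hu, one_mul] at hps
    rw [← hps]
    refine Finset.sum_congr rfl (fun j _ => ?_)
    rw [real_inner_comm (b j) u, sq]
  obtain ⟨M, hMdef⟩ : ∃ M : ℝ, M = ε / h * q ^ (n - 1) := ⟨_, rfl⟩
  have hM0 : 0 ≤ M := by
    rw [hMdef]
    exact mul_nonneg (div_nonneg hε0 hh.le) (pow_nonneg hq0.le _)
  have hMsum : (1 : ℝ) ≤ (n : ℝ) * M ^ 2 := by
    rw [← hpars]
    calc ∑ j : Fin n, ⟪b j, u⟫ ^ 2 ≤ ∑ _j : Fin n, M ^ 2 := by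
          refine Finset.sum_le_sum (fun j _ => ?_)
          have h1 : |⟪b j, u⟫| ≤ ε / h * q ^ (j : ℕ) := htri j
          have h2 : q ^ (j : ℕ) ≤ q ^ (n - 1) :=
            pow_le_pow_right₀ hq1 (by omega)
          have h3 : |⟪b j, u⟫| ≤ M := by
            refine h1.trans ?_
            rw [hMdef]
            exact mul_le_mul_of_nonneg_left h2 (div_nonneg hε0 hh.le)
          calc ⟪b j, u⟫ ^ 2 = |⟪b j, u⟫| ^ 2 := (sq_abs _).symm
            _ ≤ M ^ 2 := by nlinarith [abs_nonneg (⟪b j, u⟫ : ℝ)]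
      _ = (n : ℝ) * M ^ 2 := by
          rw [Finset.sum_const, Finset.card_univ, Fintype.card_fin, nsmul_eq_mul]
  have hqn : q ^ n = q ^ (n - 1) * q := by
    rw [← pow_succ]
    congr 1
    omega
  have hMval : M = 1 / (2 * (n : ℝ) * q) := by
    rw [hMdef, hεdef, hrdef, hqn]
    have hq' : q ^ (n - 1) ≠ 0 := (pow_pos hq0 _).ne'
    field_simp
    ring
  rw [hMval] at hMsum
  have hfin : (n : ℝ) * (1 / (2 * (n : ℝ) * q)) ^ 2 = 1 / (4 * (n : ℝ) * q ^ 2) := by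
    field_simp
    ring
  rw [hfin] at hMsum
  have hx4 : (0 : ℝ) < 4 * (n : ℝ) * q ^ 2 := by positivity
  rw [le_div_iff₀ hx4, one_mul] at hMsum
  have hnR1 : (1 : ℝ) ≤ (n : ℝ) := by exact_mod_cast hn
  have hq2 : (1 : ℝ) ≤ q ^ 2 := by nlinarith
  nlinarith [hMsum, hq2, hnR1]
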